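/- If c₁ ≥ c₂ > 0 are real numbers, then the function t ↦ coth(c₁ t)/coth(c₂ t) is monotone increasing on (0, ∞). -/

import Mathlib

/-- The real hyperbolic cotangent. -/
noncomputable def coth (x : ℝ) : ℝ := Real.cosh x / Real.sinh x

lemma sinh_le_mul_cosh {x : ℝ} (hx : 0 ≤ x) : Real.sinh x ≤ x * Real.cosh x := by
  have h : MonotoneOn (fun x : ℝ => x * Real.cosh x - Real.sinh x) (Set.Ici 0) := by
    apply monotoneOn_of_hasDerivWithinAt_nonneg (f' := fun x => x * Real.sinh x)
      (convex_Ici 0)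
    · fun_prop
    · intro y hy
      have : HasDerivAt (fun x : ℝ => x * Real.cosh x - Real.sinh x)
          (1 * Real.cosh y + y * Real.sinh y - Real.cosh y) y :=
        ((hasDerivAt_id y).mul (Real.hasDerivAt_cosh y)).sub (Real.hasDerivAt_sinh y)
      have := this.hasDerivWithinAt (s := interior (Set.Ici (0:ℝ)))
      exact this.congr_deriv (by ring)
    · intro y hy
      rw [interior_Ici] at hy
      have hy' : (0:ℝ) < y := hy
      have : 0 < Real.sinh y := Real.sinh_pos_iff.mpr hy'
      positivity
  have := h (Set.self_mem_Ici) hx hx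
  simpa using this

lemma mul_sinh_le {a b : ℝ} (ha : 0 < a) (hab : a ≤ b) :
    b * Real.sinh a ≤ a * Real.sinh b := by
  have hb : 0 < b := lt_of_lt_of_le ha hab
  have h : MonotoneOn (fun x : ℝ => Real.sinh x / x) (Set.Ioi 0) := by
    apply monotoneOn_of_hasDerivWithinAt_nonneg
      (f' := fun x => (Real.cosh x * x - Real.sinh x) / x ^ 2) (convex_Ioi 0)
    · apply ContinuousOn.div (by fun_prop) (by fun_prop)
      intro y hy
      exact ne_of_gt hy
    · intro y hy
      rw [interior_Ioi] at hy
      have hy' : (0:ℝ) < y := hy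
      have : HasDerivAt (fun x : ℝ => Real.sinh x / x)
          ((Real.cosh y * y - Real.sinh y * 1) / y ^ 2) y :=
        (Real.hasDerivAt_sinh y).div (hasDerivAt_id y) (ne_of_gt hy')
      have := this.hasDerivWithinAt (s := interior (Set.Ioi (0:ℝ)))
      exact this.congr_deriv (by ring)
    · intro y hy
      rw [interior_Ioi] at hy
      have hy' : (0:ℝ) < y := hy
      apply div_nonneg _ (by positivity)
      have := sinh_le_mul_cosh hy'.le
      nlinarith
  have := h (Set.mem_Ioi.mpr ha) (Set.mem_Ioi.mpr hb) hab
  rw [div_le_div_iff₀ ha hb] at this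
  nlinarith

theorem coth_ratio_monotone (c₁ c₂ : ℝ) (h₁ : c₁ ≥ c₂) (h₂ : c₂ > 0) :
    MonotoneOn (fun t : ℝ => coth (c₁ * t) / coth (c₂ * t)) (Set.Ioi (0 : ℝ)) := by
  have hc₁ : (0:ℝ) < c₁ := lt_of_lt_of_le h₂ h₁
  apply monotoneOn_of_hasDerivWithinAt_nonneg (convex_Ioi 0)
    (f' := fun t => (c₂ * Real.cosh (c₁ * t) * Real.sinh (c₁ * t)
      - c₁ * Real.cosh (c₂ * t) * Real.sinh (c₂ * t))
      / (Real.sinh (c₁ * t) * Real.cosh (c₂ * t)) ^ 2)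
  · -- continuity
    simp only [coth]
    have hs : ∀ (c : ℝ), 0 < c → ∀ t ∈ Set.Ioi (0:ℝ), Real.sinh (c * t) ≠ 0 := by
      intro c hc t ht
      exact ne_of_gt (Real.sinh_pos_iff.mpr (mul_pos hc ht))
    apply ContinuousOn.div
    · exact ContinuousOn.div (by fun_prop) (by fun_prop) (hs c₁ hc₁)
    · exact ContinuousOn.div (by fun_prop) (by fun_prop) (hs c₂ h₂)
    · intro t ht
      have h1 : 0 < Real.sinh (c₂ * t) := Real.sinh_pos_iff.mpr (by exact mul_pos h₂ ht)
      have h2 : 0 < Real.cosh (c₂ * t) := Real.cosh_pos _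
      positivity
  · -- derivative
    intro t ht
    rw [interior_Ioi] at ht
    have ht' : (0:ℝ) < t := ht
    have hs₁ : 0 < Real.sinh (c₁ * t) := Real.sinh_pos_iff.mpr (mul_pos hc₁ ht')
    have hs₂ : 0 < Real.sinh (c₂ * t) := Real.sinh_pos_iff.mpr (mul_pos h₂ ht')
    have hc₁' : 0 < Real.cosh (c₁ * t) := Real.cosh_pos _
    have hc₂' : 0 < Real.cosh (c₂ * t) := Real.cosh_pos _
    have dmul : ∀ c : ℝ, HasDerivAt (fun t : ℝ => c * t) c t := by
      intro c
      simpa using (hasDerivAt_id t).const_mul c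
    have dcosh : ∀ c : ℝ, HasDerivAt (fun t : ℝ => Real.cosh (c * t))
        (Real.sinh (c * t) * c) t := fun c =>
      (Real.hasDerivAt_cosh (c * t)).comp t (dmul c)
    have dsinh : ∀ c : ℝ, HasDerivAt (fun t : ℝ => Real.sinh (c * t))
        (Real.cosh (c * t) * c) t := fun c =>
      (Real.hasDerivAt_sinh (c * t)).comp t (dmul c)
    have dcoth : ∀ c : ℝ, 0 < c → HasDerivAt (fun t : ℝ => coth (c * t))
        ((Real.sinh (c * t) * c * Real.sinh (c * t)
          - Real.cosh (c * t) * (Real.cosh (c * t) * c)) / Real.sinh (c * t) ^ 2) t := by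
      intro c hc
      have hsc : Real.sinh (c * t) ≠ 0 := ne_of_gt (Real.sinh_pos_iff.mpr (mul_pos hc ht'))
      exact (dcosh c).div (dsinh c) hsc
    have hcoth₂ : coth (c₂ * t) ≠ 0 := by
      simp only [coth]
      positivity
    have D := (dcoth c₁ hc₁).div (dcoth c₂ h₂) hcoth₂
    have heq : ((Real.sinh (c₁ * t) * c₁ * Real.sinh (c₁ * t) -
            Real.cosh (c₁ * t) * (Real.cosh (c₁ * t) * c₁)) / Real.sinh (c₁ * t) ^ 2 *
            coth (c₂ * t) -
          coth (c₁ * t) *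
            ((Real.sinh (c₂ * t) * c₂ * Real.sinh (c₂ * t) -
              Real.cosh (c₂ * t) * (Real.cosh (c₂ * t) * c₂)) / Real.sinh (c₂ * t) ^ 2)) /
          coth (c₂ * t) ^ 2
        = (c₂ * Real.cosh (c₁ * t) * Real.sinh (c₁ * t)
          - c₁ * Real.cosh (c₂ * t) * Real.sinh (c₂ * t))
          / (Real.sinh (c₁ * t) * Real.cosh (c₂ * t)) ^ 2 := by
      have p₁ : Real.cosh (c₁ * t) ^ 2 - Real.sinh (c₁ * t) ^ 2 = 1 :=
        Real.cosh_sq_sub_sinh_sq (c₁ * t)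
      have p₂ : Real.cosh (c₂ * t) ^ 2 - Real.sinh (c₂ * t) ^ 2 = 1 :=
        Real.cosh_sq_sub_sinh_sq (c₂ * t)
      have hA : Real.sinh (c₁ * t) * c₁ * Real.sinh (c₁ * t) -
          Real.cosh (c₁ * t) * (Real.cosh (c₁ * t) * c₁) = -c₁ := by
        linear_combination (-c₁) * p₁
      have hB : Real.sinh (c₂ * t) * c₂ * Real.sinh (c₂ * t) -
          Real.cosh (c₂ * t) * (Real.cosh (c₂ * t) * c₂) = -c₂ := by
        linear_combination (-c₂) * p₂
      rw [hA, hB]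
      simp only [coth]
      field_simp
      ring
    rw [heq] at D
    exact D.hasDerivWithinAt
  · -- nonnegativity
    intro t ht
    rw [interior_Ioi] at ht
    have ht' : (0:ℝ) < t := ht
    apply div_nonneg _ (by positivity)
    rw [sub_nonneg]
    have key := mul_sinh_le (a := 2 * (c₂ * t)) (b := 2 * (c₁ * t))
      (by positivity) (by nlinarith)
    rw [Real.sinh_two_mul, Real.sinh_two_mul] at key
    nlinarith
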